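/- arXiv:2605.24976 — 2 statements merged into one kernel-verified Lean document; each statement's English description precedes it below -/
import Mathlib

section
/- For an invertible n × n complex matrix A and complementary index sets I, J ⊆ {1,…,n} with |I| = |J|, the minor of A^{-1} on rows I and columns J equals (det A)^{-1} times (a sign) times the complementary minor of A on rows {1,…,n}\J and columns {1,…,n}\I (Jacobi's complementary minor identity). -/
open Finset Matrix Equiv

namespace JacobiAux

variable {n k : ℕ}

/-- The equivalence `Fin k ⊕ Fin (n-k) ≃ Fin n` listing `I` in order, then `Iᶜ` in order. -/
noncomputable def g (I : Finset (Fin n)) (hI : I.card = k) (hIc : Iᶜ.card = n - k) :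
    Fin k ⊕ Fin (n - k) ≃ Fin n :=
  Equiv.ofBijective
    (Sum.elim (fun a => ((I.orderIsoOfFin hI a : Fin n)))
      (fun b => ((Iᶜ.orderIsoOfFin hIc b : Fin n)))) (by
    have hkn : k ≤ n := by
      have := I.card_le_univ
      simpa [hI] using this
    rw [Fintype.bijective_iff_injective_and_card]
    constructor
    · rintro (a | a) (b | b) h <;>
        simp only [Sum.elim_inl, Sum.elim_inr, Finset.coe_orderIsoOfFin_apply] at h
      · exact congrArg Sum.inl ((I.orderEmbOfFin hI).injective h)
      · have h1 := I.orderEmbOfFin_mem hI a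
        have h2 := Iᶜ.orderEmbOfFin_mem hIc b
        rw [h] at h1
        exact absurd h1 (Finset.mem_compl.mp h2)
      · have h1 := Iᶜ.orderEmbOfFin_mem hIc a
        have h2 := I.orderEmbOfFin_mem hI b
        rw [← h] at h2
        exact absurd h2 (Finset.mem_compl.mp h1)
      · exact congrArg Sum.inr ((Iᶜ.orderEmbOfFin hIc).injective h)
    · simp [Nat.add_sub_cancel' hkn])

@[simp] lemma g_inl (I : Finset (Fin n)) (hI : I.card = k) (hIc : Iᶜ.card = n - k) (a : Fin k) :
    g I hI hIc (Sum.inl a) = I.orderEmbOfFin hI a := by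
  simp [g, Equiv.ofBijective]

@[simp] lemma g_inr (I : Finset (Fin n)) (hI : I.card = k) (hIc : Iᶜ.card = n - k)
    (b : Fin (n - k)) : g I hI hIc (Sum.inr b) = Iᶜ.orderEmbOfFin hIc b := by
  simp [g, Equiv.ofBijective]

/-- Base equivalence `Fin k ⊕ Fin (n-k) ≃ Fin n`. -/
def e0 (hkn : k + (n - k) = n) : Fin k ⊕ Fin (n - k) ≃ Fin n :=
  finSumFinEquiv.trans (finCongr hkn)

/-- The sorting permutation associated to `I`. -/
noncomputable def p (hkn : k + (n - k) = n) (I : Finset (Fin n)) (hI : I.card = k)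
    (hIc : Iᶜ.card = n - k) : Equiv.Perm (Fin n) :=
  (e0 hkn).symm.trans (g I hI hIc)

lemma sign_p (hkn : k + (n - k) = n) (N : ℕ) :
    ∀ (I : Finset (Fin n)) (hI : I.card = k) (hIc : Iᶜ.card = n - k),
      (∑ i ∈ I, (i : ℕ)) = N →
      Equiv.Perm.sign (p hkn I hI hIc) = (-1 : ℤˣ) ^ (N + k * (k - 1) / 2) := by
  induction N using Nat.strong_induction_on with
  | _ N IH =>
    intro I hI hIc hsum
    by_cases hbase : ∀ i ∈ I, (i : ℕ) < k
    · -- base case : I = {0, ..., k-1}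
      have hkn' : k ≤ n := le_of_le_of_eq (Nat.le_add_right k (n - k)) hkn
      have himg : Finset.univ.filter (fun x : Fin n => (x : ℕ) < k) =
          Finset.univ.image (Fin.castLE hkn') := by
        ext x
        constructor
        · intro hx
          have hx' : (x : ℕ) < k := (Finset.mem_filter.mp hx).2
          exact Finset.mem_image.mpr ⟨⟨(x : ℕ), hx'⟩, Finset.mem_univ _, by ext; simp⟩
        · intro hx
          obtain ⟨a, -, rfl⟩ := Finset.mem_image.mp hx
          exact Finset.mem_filter.mpr ⟨Finset.mem_univ _, a.2⟩
      have hS : I = Finset.univ.filter (fun x : Fin n => (x : ℕ) < k) := by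
        apply Finset.eq_of_subset_of_card_le
        · intro x hx
          exact Finset.mem_filter.mpr ⟨Finset.mem_univ _, hbase x hx⟩
        · rw [himg, Finset.card_image_of_injective _ (Fin.castLE_injective hkn'), hI]
          simp
      have hordI : ∀ a : Fin k, I.orderEmbOfFin hI a = Fin.castLE hkn' a := by
        have := Finset.orderEmbOfFin_unique hI (f := fun a : Fin k => Fin.castLE hkn' a)
          (fun a => by
            rw [hS]
            exact Finset.mem_filter.mpr ⟨Finset.mem_univ _, a.2⟩)
          (fun a b hab => hab)
        intro a; rw [← congrFun this a]
      have hordIc : ∀ b : Fin (n - k), (Iᶜ.orderEmbOfFin hIc b : Fin n) =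
          ⟨k + (b : ℕ), lt_of_lt_of_le (Nat.add_lt_add_left b.isLt k) (le_of_eq hkn)⟩ := by
        have := Finset.orderEmbOfFin_unique hIc
          (f := fun b : Fin (n - k) => (⟨k + (b : ℕ),
            lt_of_lt_of_le (Nat.add_lt_add_left b.isLt k) (le_of_eq hkn)⟩ : Fin n))
          (fun b => by
            rw [hS]
            simp only [Finset.mem_compl, Finset.mem_filter, Finset.mem_univ, true_and, not_lt]
            exact Nat.le_add_right k _)
          (fun a b hab => Fin.mk_lt_mk.mpr (Nat.add_lt_add_left hab k))
        intro b; rw [← congrFun this b]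
      have hg : g I hI hIc = e0 hkn := by
        apply Equiv.ext
        rintro (a | b)
        · rw [g_inl, hordI]
          apply Fin.ext
          simp [e0]
        · rw [g_inr, hordIc]
          apply Fin.ext
          simp [e0]
      have hp1 : p hkn I hI hIc = Equiv.refl _ := by
        rw [p, hg]
        ext x
        simp
      have hN : N = k * (k - 1) / 2 := by
        rw [← hsum, hS, himg,
          Finset.sum_image (fun a _ b _ h => Fin.castLE_injective hkn' h)]
        simp only [Fin.coe_castLE]
        exact (Fin.sum_univ_eq_sum_range (fun i => i) k).trans (Finset.sum_range_id k)
      rw [hp1, hN]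
      have hev : Even (k * (k - 1) / 2 + k * (k - 1) / 2) := ⟨_, rfl⟩
      rw [Equiv.Perm.sign_refl, Even.neg_one_pow hev]
    · -- inductive step: find i ∈ I with predecessor not in I
      push_neg at hbase
      obtain ⟨i₀, hi₀I, hi₀k⟩ := hbase
      -- find j ∉ I with j ≤ i₀
      have hj : ∃ j : Fin n, (j : ℕ) ≤ (i₀ : ℕ) ∧ j ∉ I := by
        by_contra h
        push_neg at h
        have hsub : Finset.Iic i₀ ⊆ I := fun x hx => h x (Fin.le_def.mp (Finset.mem_Iic.mp hx))
        have := Finset.card_le_card hsub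
        rw [Fin.card_Iic, hI] at this
        omega
      obtain ⟨j, hji, hjI⟩ := hj
      -- take the minimal element of I above j
      set T : Finset (Fin n) := I.filter (fun m => (j : ℕ) < (m : ℕ)) with hT
      have hTne : T.Nonempty := ⟨i₀, by
        rw [hT, Finset.mem_filter]
        refine ⟨hi₀I, lt_of_le_of_ne hji ?_⟩
        intro h
        exact hjI (by rwa [show j = i₀ from Fin.ext h])⟩
      set m : Fin n := T.min' hTne with hm
      have hmT : m ∈ T := T.min'_mem hTne
      have hmI : m ∈ I := (Finset.mem_filter.mp hmT).1
      have hjm : (j : ℕ) < (m : ℕ) := (Finset.mem_filter.mp hmT).2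
      have hmpos : 0 < (m : ℕ) := by omega
      obtain ⟨i', hvi'⟩ : ∃ i' : Fin n, (i' : ℕ) = (m : ℕ) - 1 :=
        ⟨⟨(m : ℕ) - 1, by omega⟩, rfl⟩
      have hi'I : i' ∉ I := by
        intro hmem
        rcases Nat.lt_or_ge (j : ℕ) ((m : ℕ) - 1) with h | h
        · have hiT : i' ∈ T := Finset.mem_filter.mpr ⟨hmem, by omega⟩
          have hle : (m : ℕ) ≤ (i' : ℕ) := Fin.le_def.mp (T.min'_le i' hiT)
          omega
        · have hji' : (i' : ℕ) = (j : ℕ) := by omega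
          exact hjI (by rwa [show i' = j from Fin.ext hji'] at hmem)
      have hne : i' ≠ m := by
        intro h
        have := congrArg Fin.val h
        omega
      have hi'm : i' < m := by
        rw [Fin.lt_def]
        omega
      -- the modified set
      set I' : Finset (Fin n) := insert i' (I.erase m) with hI'def
      have hi'e : i' ∉ I.erase m := fun h => hi'I (Finset.mem_of_mem_erase h)
      have hk0 : 0 < k := hI ▸ Finset.card_pos.mpr ⟨m, hmI⟩
      have hI' : I'.card = k := by
        rw [hI'def, Finset.card_insert_of_notMem hi'e, Finset.card_erase_of_mem hmI, hI]
        omega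
      have hI'c : I'ᶜ.card = n - k := by
        rw [Finset.card_compl, hI']
        simp
      have hsum' : (∑ x ∈ I', (x : ℕ)) + 1 = N := by
        rw [hI'def, Finset.sum_insert hi'e]
        have hadd : (m : ℕ) + ∑ x ∈ I.erase m, (x : ℕ) = ∑ x ∈ I, (x : ℕ) :=
          Finset.add_sum_erase I (fun x : Fin n => (x : ℕ)) hmI
        omega
      -- membership facts for swap
      have swap_mem_I : ∀ x ∈ I, Equiv.swap i' m x ∈ I' := by
        intro x hx
        rcases eq_or_ne x m with rfl | hxm
        · rw [Equiv.swap_apply_right]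
          exact Finset.mem_insert_self _ _
        · have hxi' : x ≠ i' := fun h => hi'I (h ▸ hx)
          rw [Equiv.swap_apply_of_ne_of_ne hxi' hxm]
          exact Finset.mem_insert_of_mem (Finset.mem_erase.mpr ⟨hxm, hx⟩)
      have swap_mem_Ic : ∀ x ∈ Iᶜ, Equiv.swap i' m x ∈ I'ᶜ := by
        intro x hx
        rw [Finset.mem_compl] at hx
        rcases eq_or_ne x i' with rfl | hxi'
        · rw [Equiv.swap_apply_left, Finset.mem_compl, hI'def]
          intro h
          rcases Finset.mem_insert.mp h with h | h
          · exact hne h.symm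
          · exact (Finset.mem_erase.mp h).1 rfl
        · have hxm : x ≠ m := fun h => hx (h ▸ hmI)
          rw [Equiv.swap_apply_of_ne_of_ne hxi' hxm, Finset.mem_compl, hI'def]
          intro h
          rcases Finset.mem_insert.mp h with h | h
          · exact hxi' h
          · exact hx (Finset.mem_of_mem_erase h)
      -- strict mono facts
      have swap_mono_I : ∀ x ∈ I, ∀ y ∈ I, x < y →
          Equiv.swap i' m x < Equiv.swap i' m y := by
        intro x hx y hy hxy
        have hxi' : x ≠ i' := fun h => hi'I (h ▸ hx)
        have hyi' : y ≠ i' := fun h => hi'I (h ▸ hy)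
        rcases eq_or_ne x m with rfl | hxm
        · rw [Equiv.swap_apply_right, Equiv.swap_apply_of_ne_of_ne hyi' (ne_of_gt hxy)]
          exact lt_trans hi'm hxy
        · rcases eq_or_ne y m with rfl | hym
          · rw [Equiv.swap_apply_right, Equiv.swap_apply_of_ne_of_ne hxi' hxm]
            rw [Fin.lt_def] at hxy ⊢
            have : (x : ℕ) ≠ (m : ℕ) - 1 := fun h => hxi' (Fin.ext (h.trans hvi'.symm))
            omega
          · rw [Equiv.swap_apply_of_ne_of_ne hxi' hxm,
              Equiv.swap_apply_of_ne_of_ne hyi' hym]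
            exact hxy
      have swap_mono_Ic : ∀ x ∈ Iᶜ, ∀ y ∈ Iᶜ, x < y →
          Equiv.swap i' m x < Equiv.swap i' m y := by
        intro x hx y hy hxy
        rw [Finset.mem_compl] at hx hy
        have hxm : x ≠ m := fun h => hx (h ▸ hmI)
        have hym : y ≠ m := fun h => hy (h ▸ hmI)
        rcases eq_or_ne x i' with rfl | hxi'
        · rw [Equiv.swap_apply_left, Equiv.swap_apply_of_ne_of_ne hxy.ne' hym]
          have hyne : (y : ℕ) ≠ (m : ℕ) := fun h => hym (Fin.ext h)
          rw [Fin.lt_def] at hxy ⊢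
          omega
        · rcases eq_or_ne y i' with rfl | hyi'
          · rw [Equiv.swap_apply_left, Equiv.swap_apply_of_ne_of_ne hxi' hxm]
            rw [Fin.lt_def] at hxy ⊢
            omega
          · rw [Equiv.swap_apply_of_ne_of_ne hxi' hxm,
              Equiv.swap_apply_of_ne_of_ne hyi' hym]
            exact hxy
      -- the order embeddings transform by the swap
      have hembI : ∀ a : Fin k, I'.orderEmbOfFin hI' a =
          Equiv.swap i' m (I.orderEmbOfFin hI a) := by
        have := Finset.orderEmbOfFin_unique hI'
          (f := fun a : Fin k => Equiv.swap i' m (I.orderEmbOfFin hI a))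
          (fun a => swap_mem_I _ (I.orderEmbOfFin_mem hI a))
          (fun a b hab => swap_mono_I _ (I.orderEmbOfFin_mem hI a) _
            (I.orderEmbOfFin_mem hI b) ((I.orderEmbOfFin hI).strictMono hab))
        intro a; rw [← congrFun this a]
      have hembIc : ∀ b : Fin (n - k), I'ᶜ.orderEmbOfFin hI'c b =
          Equiv.swap i' m (Iᶜ.orderEmbOfFin hIc b) := by
        have := Finset.orderEmbOfFin_unique hI'c
          (f := fun b : Fin (n - k) => Equiv.swap i' m (Iᶜ.orderEmbOfFin hIc b))
          (fun b => swap_mem_Ic _ (Iᶜ.orderEmbOfFin_mem hIc b))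
          (fun a b hab => swap_mono_Ic _ (Iᶜ.orderEmbOfFin_mem hIc a) _
            (Iᶜ.orderEmbOfFin_mem hIc b) ((Iᶜ.orderEmbOfFin hIc).strictMono hab))
        intro b; rw [← congrFun this b]
      have hg' : g I' hI' hI'c = (g I hI hIc).trans (Equiv.swap i' m) := by
        apply Equiv.ext
        rintro (a | b)
        · simp [hembI a]
        · simp [hembIc b]
      have hp' : p hkn I' hI' hI'c = (Equiv.swap i' m) * (p hkn I hI hIc) := by
        apply Equiv.ext
        intro x
        rw [p, hg']
        rfl
      have hIH := IH (N - 1) (by omega) I' hI' hI'c (by omega)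
      rw [hp'] at hIH
      rw [_root_.map_mul, Equiv.Perm.sign_swap hne] at hIH
      have hsign : Equiv.Perm.sign (p hkn I hI hIc) =
          (-1) * ((-1 : ℤˣ) ^ (N - 1 + k * (k - 1) / 2)) := by
        rw [← hIH, ← mul_assoc]
        norm_num
      rw [hsign]
      have hN1 : N - 1 + k * (k - 1) / 2 + 1 = N + k * (k - 1) / 2 := by omega
      rw [← hN1, pow_succ, mul_comm]
end JacobiAux

open JacobiAux Matrix in
/-- Jacobi's complementary minor identity: for invertible `A`, the minor of `A⁻¹` on rows `I`
and columns `J` equals `(det A)⁻¹` times the sign `(-1)^(Σ_{i∈I} i + Σ_{j∈J} j)` times the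
complementary minor of `A` on rows `Jᶜ` and columns `Iᶜ`. -/
theorem jacobi_complementary_minor {n k : ℕ} (A : Matrix (Fin n) (Fin n) ℂ)
    (hA : IsUnit A.det) (I J : Finset (Fin n)) (hI : I.card = k) (hJ : J.card = k)
    (hIc : Iᶜ.card = n - k) (hJc : Jᶜ.card = n - k) :
    (A⁻¹.submatrix (fun a : Fin k => (I.orderIsoOfFin hI a : Fin n))
        (fun a : Fin k => (J.orderIsoOfFin hJ a : Fin n))).det
      = A.det⁻¹ * (-1 : ℂ) ^ (∑ i ∈ I, (i : ℕ) + ∑ j ∈ J, (j : ℕ)) *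
        (A.submatrix (fun a : Fin (n - k) => (Jᶜ.orderIsoOfFin hJc a : Fin n))
          (fun a : Fin (n - k) => (Iᶜ.orderIsoOfFin hIc a : Fin n))).det := by
  have hkn' : k ≤ n := by
    have := I.card_le_univ
    simpa [hI] using this
  have hkn : k + (n - k) = n := Nat.add_sub_cancel' hkn'
  set gI := g I hI hIc with hgI
  set gJ := g J hJ hJc with hgJ
  set M := A.submatrix gJ gI with hMdef
  set e : ℕ := ∑ i ∈ I, (i : ℕ) + ∑ j ∈ J, (j : ℕ) with he
  -- the determinant of M
  have hMeq : M = (A.submatrix gJ gJ).submatrix id (gI.trans gJ.symm) := by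
    ext i j
    simp [hMdef, Matrix.submatrix_apply]
  have hdetM : M.det = ((Equiv.Perm.sign (gI.trans gJ.symm) : ℤ) : ℂ) * A.det := by
    rw [hMeq, Matrix.det_permute', Matrix.det_submatrix_equiv_self]
  have hconj : (e0 hkn).permCongr (gI.trans gJ.symm) =
      (p hkn I hI hIc).trans (p hkn J hJ hJc).symm := by
    ext x
    simp [Equiv.permCongr_apply, p]
    rfl
  have hsig : Equiv.Perm.sign (gI.trans gJ.symm) =
      (-1 : ℤˣ) ^ (∑ i ∈ I, (i : ℕ) + k * (k - 1) / 2) *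
        (-1 : ℤˣ) ^ (∑ j ∈ J, (j : ℕ) + k * (k - 1) / 2) := by
    rw [← Equiv.Perm.sign_permCongr (e0 hkn), hconj]
    have h2 : (p hkn I hI hIc).trans (p hkn J hJ hJc).symm
        = (p hkn J hJ hJc)⁻¹ * (p hkn I hI hIc) := rfl
    have hinvpow : ((-1 : ℤˣ) ^ (∑ j ∈ J, (j : ℕ) + k * (k - 1) / 2))⁻¹
        = (-1 : ℤˣ) ^ (∑ j ∈ J, (j : ℕ) + k * (k - 1) / 2) := by
      rw [← inv_pow]
      norm_num
    rw [h2, _root_.map_mul, _root_.map_inv, sign_p hkn _ I hI hIc rfl,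
      sign_p hkn _ J hJ hJc rfl, hinvpow, mul_comm]
  have hcast : ((Equiv.Perm.sign (gI.trans gJ.symm) : ℤ) : ℂ) = (-1 : ℂ) ^ e := by
    rw [hsig]
    rw [Units.val_mul, Units.val_pow_eq_pow_val, Units.val_pow_eq_pow_val]
    push_cast
    rw [← pow_add]
    have harith : ∑ i ∈ I, (i : ℕ) + k * (k - 1) / 2 +
        (∑ j ∈ J, (j : ℕ) + k * (k - 1) / 2) = e + 2 * (k * (k - 1) / 2) := by
      rw [he]; ring
    rw [harith, pow_add, pow_mul]
    norm_num
  have hMdet : M.det = (-1 : ℂ) ^ e * A.det := by rw [hdetM, hcast]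
  have hAne : A.det ≠ 0 := hA.ne_zero
  have hMne : M.det ≠ 0 := by
    rw [hMdet]
    exact mul_ne_zero (pow_ne_zero _ (by norm_num)) hAne
  have hMunit : IsUnit M.det := isUnit_iff_ne_zero.mpr hMne
  -- block computation
  set X := M⁻¹.toBlocks₁₁ with hXdef
  set Z := M⁻¹.toBlocks₂₁ with hZdef
  have hinv : M * M⁻¹ = 1 := Matrix.mul_nonsing_inv M hMunit
  have hinv2 : Matrix.fromBlocks (M.toBlocks₁₁) (M.toBlocks₁₂) (M.toBlocks₂₁) (M.toBlocks₂₂) *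
      Matrix.fromBlocks (M⁻¹.toBlocks₁₁) (M⁻¹.toBlocks₁₂) (M⁻¹.toBlocks₂₁) (M⁻¹.toBlocks₂₂)
      = Matrix.fromBlocks 1 0 0 1 := by
    rw [Matrix.fromBlocks_toBlocks, Matrix.fromBlocks_toBlocks, Matrix.fromBlocks_one]
    exact hinv
  rw [Matrix.fromBlocks_multiply] at hinv2
  have e11 := congrArg Matrix.toBlocks₁₁ hinv2
  have e21 := congrArg Matrix.toBlocks₂₁ hinv2
  simp only [Matrix.toBlocks_fromBlocks₁₁, Matrix.toBlocks_fromBlocks₂₁] at e11 e21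
  have hMN : M * Matrix.fromBlocks X 0 Z 1 =
      Matrix.fromBlocks 1 (M.toBlocks₁₂) 0 (M.toBlocks₂₂) := by
    conv_lhs => rw [← Matrix.fromBlocks_toBlocks M]
    rw [Matrix.fromBlocks_multiply]
    rw [← hXdef, ← hZdef] at e11 e21
    rw [e11, e21]
    simp
  have hdets := congrArg Matrix.det hMN
  rw [Matrix.det_mul, Matrix.det_fromBlocks_zero₁₂, Matrix.det_fromBlocks_zero₂₁] at hdets
  simp only [Matrix.det_one, one_mul, mul_one] at hdets
  -- identify the blocks
  have hXeq : X = A⁻¹.submatrix (fun a : Fin k => (I.orderIsoOfFin hI a : Fin n))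
      (fun a : Fin k => (J.orderIsoOfFin hJ a : Fin n)) := by
    have hMinv : M⁻¹ = A⁻¹.submatrix gI gJ := Matrix.inv_submatrix_equiv A gJ gI
    rw [hXdef, hMinv]
    ext i j
    simp [Matrix.toBlocks₁₁, hgI, hgJ, Finset.coe_orderIsoOfFin_apply]
  have hDeq : M.toBlocks₂₂ = A.submatrix
      (fun a : Fin (n - k) => (Jᶜ.orderIsoOfFin hJc a : Fin n))
      (fun a : Fin (n - k) => (Iᶜ.orderIsoOfFin hIc a : Fin n)) := by
    ext i j
    simp [Matrix.toBlocks₂₂, hMdef, hgI, hgJ, Finset.coe_orderIsoOfFin_apply]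
  rw [← hXeq, ← hDeq]
  have hX : X.det = M.det⁻¹ * (M.toBlocks₂₂).det := by
    rw [← hdets, ← mul_assoc, inv_mul_cancel₀ hMne, one_mul]
  rw [hX, hMdet, mul_inv]
  have hεinv : ((-1 : ℂ) ^ e)⁻¹ = (-1 : ℂ) ^ e := by
    rw [← inv_pow]
    norm_num
  rw [hεinv]
  ring
end

section
/- (Bialternant factorization, column side.) Let y_1,…,y_N be pairwise distinct with |y_l| < 1, let φ_-(z) = ∏_{l=1}^N (1 - y_l/z)^{-1}, let φ_+ be analytic and nonvanishing near the closed unit disk with φ_+(0)=1, and set φ = φ_- φ_+ (so G(φ)=1). Let ξ_1,…,ξ_N be analytic in a neighborhood of |z| ≤ 1. Then det[(ξ_j φ)_{i-j}]_{i,j=1}^N = (det[y_i^{N-j} ξ_{N-j+1}(y_i)]_{i,j=1}^N / ∏_{i<j}(y_i - y_j)) · ∏_{l=1}^N φ_+(y_l). -/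
open Finset Complex Metric in
lemma circleIntegral_finset_sum' {ι : Type*} (s : Finset ι) (f : ι → ℂ → ℂ) {c : ℂ} {R : ℝ}
    (h : ∀ i ∈ s, CircleIntegrable (f i) c R) :
    (∮ z in C(c, R), ∑ i ∈ s, f i z) = ∑ i ∈ s, ∮ z in C(c, R), f i z := by
  simp only [circleIntegral, Finset.smul_sum]
  exact intervalIntegral.integral_finset_sum fun i hi => (h i hi).out

open Finset in
lemma partial_fractions' {N : ℕ} (hN : 0 < N) (y : Fin N → ℂ) (hy : Function.Injective y)
    {z : ℂ} (hz : ∀ m, z ≠ y m) :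
    (∏ m, (z - y m))⁻¹
      = ∑ l, (∏ m ∈ Finset.univ.erase l, (y l - y m))⁻¹ * (z - y l)⁻¹ := by
  have : Nonempty (Fin N) := ⟨⟨0, hN⟩⟩
  have h1 := Lagrange.sum_basis (s := Finset.univ) (v := y) hy.injOn Finset.univ_nonempty
  have h2 := congrArg (Polynomial.eval z) h1
  simp only [Polynomial.eval_finset_sum, Polynomial.eval_one, Lagrange.basis,
    Polynomial.eval_prod, Lagrange.basisDivisor, Polynomial.eval_mul, Polynomial.eval_C,
    Polynomial.eval_sub, Polynomial.eval_X, Finset.prod_mul_distrib,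
    Finset.prod_inv_distrib] at h2
  have hP : ∀ l : Fin N, ∏ m ∈ Finset.univ.erase l, (z - y m)
      = (z - y l)⁻¹ * ∏ m, (z - y m) := by
    intro l
    rw [← Finset.mul_prod_erase Finset.univ _ (Finset.mem_univ l), inv_mul_cancel_left₀]
    exact sub_ne_zero.2 (hz l)
  have h3 : (∑ l, (∏ m ∈ Finset.univ.erase l, (y l - y m))⁻¹ * (z - y l)⁻¹)
      * ∏ m, (z - y m) = 1 := by
    rw [Finset.sum_mul, ← h2]
    exact Finset.sum_congr rfl fun l _ => by rw [hP l]; ring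
  exact inv_eq_of_mul_eq_one_left h3

open Finset in
lemma prod_filter_pairs' {N : ℕ} (g : Fin N → Fin N → ℂ) :
    ∏ p ∈ Finset.univ.filter (fun p : Fin N × Fin N => p.1 < p.2), g p.1 p.2
      = ∏ i, ∏ j ∈ Finset.Ioi i, g i j := by
  rw [Finset.prod_sigma']
  refine Finset.prod_nbij' (fun p => ⟨p.1, p.2⟩) (fun p => (p.1, p.2)) ?_ ?_ ?_ ?_ ?_ <;>
    simp [Finset.mem_sigma, Finset.mem_filter, Finset.mem_Ioi]

open Finset in
lemma prod_erase_eq' {N : ℕ} (y : Fin N → ℂ) :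
    (∏ l, ∏ m ∈ Finset.univ.erase l, (y l - y m))
      = (∏ i, ∏ j ∈ Finset.Ioi i, (y i - y j)) * ∏ i, ∏ j ∈ Finset.Ioi i, (y j - y i) := by
  have h := Finset.prod_prod_Ioi_mul_eq_prod_prod_off_diag (fun a b => y b - y a)
  simp_rw [Finset.prod_mul_distrib] at h
  rw [h]
  exact Finset.prod_congr rfl fun l _ =>
    Finset.prod_congr (by ext m; simp [eq_comm] : Finset.univ.erase l = _) fun m _ => rfl



/-- The `k`-th Fourier coefficient of a function, computed over the circle of radius `ρ`. -/
noncomputable def fcR (ρ : ℝ) (f : ℂ → ℂ) (k : ℤ) : ℂ :=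
  (2 * (Real.pi : ℂ) * Complex.I)⁻¹ * (∮ z in C(0, ρ), f z * z ^ (-k - 1))

open Finset Complex Metric in
lemma fcR_entry {N : ℕ} (hN : 0 < N) (y : Fin N → ℂ) (hy : Function.Injective y)
    {ρ : ℝ} (hρ0 : 0 < ρ) (hρy : ∀ l, ‖y l‖ < ρ)
    {r : ℝ} (hρr : ρ < r)
    {φp : ℂ → ℂ} (hp : DifferentiableOn ℂ φp (Metric.ball 0 r))
    {ξj : ℂ → ℂ} (hξj : DifferentiableOn ℂ ξj (Metric.ball 0 r))
    (i j : Fin N) :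
    fcR ρ (fun z => ξj z * (φp z * ∏ l, (1 - y l / z)⁻¹)) ((i : ℤ) - (j : ℤ))
      = ∑ l, y l ^ ((Fin.rev i : ℕ)) * (y l ^ (j : ℕ) * ξj (y l)) *
          (φp (y l) * (∏ m ∈ Finset.univ.erase l, (y l - y m))⁻¹) := by
  set n : ℕ := (Fin.rev i : ℕ) + (j : ℕ) with hn
  set f : ℂ → ℂ := fun z => ξj z * φp z * z ^ n with hf
  have hsub : closedBall (0 : ℂ) ρ ⊆ ball (0 : ℂ) r := closedBall_subset_ball hρr
  have hfd : DifferentiableOn ℂ f (closedBall (0 : ℂ) ρ) := by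
    refine (((hξj.mono hsub).mul (hp.mono hsub)).mul ?_)
    exact (differentiable_pow n).differentiableOn
  have hfc : ContinuousOn f (sphere (0 : ℂ) ρ) :=
    hfd.continuousOn.mono sphere_subset_closedBall
  have hEq : Set.EqOn
      (fun z => (ξj z * (φp z * ∏ l, (1 - y l / z)⁻¹)) * z ^ (-((i : ℤ) - (j : ℤ)) - 1))
      (fun z => ∑ l, (∏ m ∈ Finset.univ.erase l, (y l - y m))⁻¹ * ((z - y l)⁻¹ * f z))
      (sphere (0 : ℂ) ρ) := by
    intro z hz
    have hzρ : ‖z‖ = ρ := by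
      simpa using mem_sphere_iff_norm.mp hz
    have hz0 : z ≠ 0 := by
      intro h; rw [h] at hzρ; simp at hzρ; exact hρ0.ne' hzρ.symm
    have hzy : ∀ m, z ≠ y m := by
      intro m h
      have := hρy m
      rw [← h, hzρ] at this
      exact lt_irrefl _ this
    have hprod : (∏ l, (1 - y l / z)⁻¹) = z ^ N * (∏ l, (z - y l))⁻¹ := by
      rw [← Finset.prod_inv_distrib]
      rw [show (z : ℂ) ^ N = ∏ _l : Fin N, z by simp [Finset.prod_const, Finset.card_univ]]
      rw [← Finset.prod_mul_distrib]
      refine Finset.prod_congr rfl fun l _ => ?_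
      have h1 : (1 - y l / z) = (z - y l) / z := by field_simp
      rw [h1, div_eq_mul_inv, mul_inv, inv_inv, mul_comm]
    have hzpow : z ^ (-((i : ℤ) - (j : ℤ)) - 1) * z ^ N = z ^ n := by
      rw [← zpow_natCast z N, ← zpow_add₀ hz0, ← zpow_natCast z n]
      congr 1
      have hi : (i : ℕ) + 1 ≤ N := i.is_lt
      have : (n : ℤ) = (N : ℤ) - ((i : ℕ) + 1) + (j : ℕ) := by
        rw [hn, Fin.val_rev]
        push_cast [Nat.cast_sub hi]
        ring
      rw [this]; ring
    have hpf := partial_fractions' hN y hy hzy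
    simp only
    rw [hprod]
    calc ξj z * (φp z * (z ^ N * (∏ l, (z - y l))⁻¹)) * z ^ (-((i:ℤ) - (j:ℤ)) - 1)
        = (z ^ (-((i:ℤ) - (j:ℤ)) - 1) * z ^ N) * (ξj z * φp z) * (∏ l, (z - y l))⁻¹ := by
          ring
      _ = f z * (∏ l, (z - y l))⁻¹ := by rw [hzpow, hf]; ring
      _ = f z * ∑ l, (∏ m ∈ Finset.univ.erase l, (y l - y m))⁻¹ * (z - y l)⁻¹ := by
          rw [hpf]
      _ = _ := by rw [Finset.mul_sum]; exact Finset.sum_congr rfl fun l _ => by ring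
  have hint : ∀ l : Fin N, CircleIntegrable
      (fun z => (∏ m ∈ Finset.univ.erase l, (y l - y m))⁻¹ * ((z - y l)⁻¹ * f z)) 0 ρ := by
    intro l
    refine ContinuousOn.circleIntegrable hρ0.le ?_
    refine continuousOn_const.mul (ContinuousOn.mul ?_ hfc)
    refine ContinuousOn.inv₀ (continuousOn_id.sub continuousOn_const) fun z hz => ?_
    have hzρ : ‖z‖ = ρ := by
      simpa using mem_sphere_iff_norm.mp hz
    refine sub_ne_zero.2 fun h => ?_
    have := hρy l
    rw [← h, hzρ] at this
    exact lt_irrefl _ this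
  have hcauchy : ∀ l : Fin N,
      (∮ z in C(0, ρ), (z - y l)⁻¹ * f z) = (2 * Real.pi * Complex.I) * f (y l) := by
    intro l
    have hw : y l ∈ ball (0 : ℂ) ρ := by
      rw [mem_ball_zero_iff]; exact hρy l
    simpa [smul_eq_mul] using hfd.circleIntegral_sub_inv_smul hw
  rw [fcR]
  rw [circleIntegral.integral_congr hρ0.le hEq]
  rw [circleIntegral_finset_sum' _ _ fun l _ => hint l]
  rw [Finset.mul_sum]
  refine Finset.sum_congr rfl fun l _ => ?_
  rw [circleIntegral.integral_const_mul, hcauchy l]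
  have h2πI : (2 * (Real.pi : ℂ) * Complex.I) ≠ 0 := by
    simp [Real.pi_ne_zero, Complex.I_ne_zero]
  rw [hf]
  simp only
  rw [pow_add]
  field_simp


open Matrix in
/-- Bialternant factorization (column side): for pairwise distinct `|y_l| < 1`,
`φ₋(z) = ∏ (1 - y_l/z)⁻¹`, `φ₊` analytic nonvanishing near the closed unit disk with
`φ₊(0) = 1`, `φ = φ₋ φ₊`, and `ξ_j` analytic near the closed unit disk,
`det[(ξ_j φ)_{i-j}] = (det[y_i^{N-j} ξ_{N-j+1}(y_i)] / ∏_{i<j}(y_i - y_j)) · ∏ φ₊(y_l)`. -/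
theorem bialternant_column {N : ℕ} (y : Fin N → ℂ) (hy : Function.Injective y)
    (hylt : ∀ l, ‖y l‖ < 1)
    (ρ : ℝ) (hρ0 : 0 < ρ) (hρ1 : ρ < 1) (hρy : ∀ l, ‖y l‖ < ρ)
    (r : ℝ) (hr : 1 < r)
    (φp : ℂ → ℂ) (hp : DifferentiableOn ℂ φp (Metric.ball (0 : ℂ) r))
    (hp0 : φp 0 = 1) (hpne : ∀ z ∈ Metric.ball (0 : ℂ) r, φp z ≠ 0)
    (ξ : Fin N → ℂ → ℂ) (hξ : ∀ j, DifferentiableOn ℂ (ξ j) (Metric.ball (0 : ℂ) r)) :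
    Matrix.det (Matrix.of fun i j : Fin N =>
        fcR ρ (fun z => ξ j z * (φp z * ∏ l, (1 - y l / z)⁻¹)) ((i : ℤ) - (j : ℤ)))
      = Matrix.det (Matrix.of fun i j : Fin N =>
            y i ^ ((Fin.rev j : ℕ)) * ξ (Fin.rev j) (y i)) /
          (∏ p ∈ Finset.univ.filter (fun p : Fin N × Fin N => p.1 < p.2), (y p.1 - y p.2)) *
        ∏ l, φp (y l) := by
  rcases Nat.eq_zero_or_pos N with rfl | hN
  · simp [Matrix.det_fin_zero]
  -- notation
  set c : Fin N → ℂ := fun l => (∏ m ∈ Finset.univ.erase l, (y l - y m))⁻¹ with hc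
  set A : Matrix (Fin N) (Fin N) ℂ := Matrix.of fun i l => y l ^ ((Fin.rev i : ℕ)) with hA
  set B : Matrix (Fin N) (Fin N) ℂ := Matrix.of fun l j => y l ^ (j : ℕ) * ξ j (y l) with hB
  set d : Fin N → ℂ := fun l => φp (y l) * c l with hd
  have hρr : ρ < r := lt_trans hρ1 hr
  -- the matrix factorization
  have hM : (Matrix.of fun i j : Fin N =>
        fcR ρ (fun z => ξ j z * (φp z * ∏ l, (1 - y l / z)⁻¹)) ((i : ℤ) - (j : ℤ)))
      = A * (Matrix.diagonal d * B) := by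
    ext i j
    rw [Matrix.of_apply, Matrix.mul_apply]
    simp only [Matrix.diagonal_mul]
    rw [fcR_entry hN y hy hρ0 hρy hρr hp (hξ j) i j]
    refine Finset.sum_congr rfl fun l _ => ?_
    simp only [hA, hB, hd, Matrix.of_apply]
    ring
  -- determinants
  set σ : Equiv.Perm (Fin N) := Fin.revPerm with hσ
  set ε : ℂ := ((Equiv.Perm.sign σ : ℤ) : ℂ) with hε
  have hεε : ε * ε = 1 := by
    rcases Int.units_eq_one_or (Equiv.Perm.sign σ) with h | h <;> rw [hε, h] <;> norm_num
  have hdetA : A.det = ε * (Matrix.vandermonde y).det := by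
    have : A = (Matrix.vandermonde y)ᵀ.submatrix (⇑σ) id := by
      ext i l
      simp [hA, Matrix.vandermonde, hσ]
    rw [this, Matrix.det_permute, Matrix.det_transpose, hε]
  set C : Matrix (Fin N) (Fin N) ℂ := Matrix.of fun i j : Fin N =>
      y i ^ ((Fin.rev j : ℕ)) * ξ (Fin.rev j) (y i) with hC
  have hdetC : C.det = ε * B.det := by
    have : C = B.submatrix id (⇑σ) := by
      ext i j
      simp [hC, hB, hσ]
    rw [this, Matrix.det_permute', hε]
  have hdetB : B.det = ε * C.det := by
    rw [hdetC, ← mul_assoc, hεε, one_mul]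
  -- Vandermonde values
  set V : ℂ := ∏ i, ∏ j ∈ Finset.Ioi i, (y j - y i) with hV
  set D : ℂ := ∏ i, ∏ j ∈ Finset.Ioi i, (y i - y j) with hD
  have hVdet : (Matrix.vandermonde y).det = V := Matrix.det_vandermonde y
  have hVne : V ≠ 0 := by
    rw [hV]
    refine Finset.prod_ne_zero_iff.2 fun i _ => Finset.prod_ne_zero_iff.2 fun j hj => ?_
    have : j ≠ i := (Finset.mem_Ioi.mp hj).ne'
    exact sub_ne_zero.2 fun h => this (hy h)
  have hDne : D ≠ 0 := by
    rw [hD]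
    refine Finset.prod_ne_zero_iff.2 fun i _ => Finset.prod_ne_zero_iff.2 fun j hj => ?_
    have : i ≠ j := (Finset.mem_Ioi.mp hj).ne
    exact sub_ne_zero.2 fun h => this (hy h)
  have hprodc : (∏ l, c l) = (D * V)⁻¹ := by
    rw [hc]
    rw [Finset.prod_inv_distrib, prod_erase_eq' y, ← hD, ← hV]
  have hfilter : (∏ p ∈ Finset.univ.filter (fun p : Fin N × Fin N => p.1 < p.2),
      (y p.1 - y p.2)) = D := (prod_filter_pairs' fun i j => y i - y j)
  rw [hM, Matrix.det_mul, Matrix.det_mul, Matrix.det_diagonal, hdetA, hdetB, hVdet, hfilter]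
  have hprodd : (∏ i, d i) = (∏ l, φp (y l)) * (D * V)⁻¹ := by
    rw [hd]
    rw [Finset.prod_mul_distrib, hprodc]
  rw [hprodd]
  have : ε * V * ((∏ l, φp (y l)) * (D * V)⁻¹ * (ε * C.det))
      = (ε * ε) * (V * (D * V)⁻¹ * ((∏ l, φp (y l)) * C.det)) := by ring
  rw [this, hεε, one_mul, mul_inv]
  rw [show V * (D⁻¹ * V⁻¹) = D⁻¹ * (V * V⁻¹) by ring, mul_inv_cancel₀ hVne]
  rw [div_eq_mul_inv]
  ring
end
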